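/- arXiv:2011.00389 — 2 statements merged into one kernel-verified Lean document; each statement's English description precedes it below -/
import Mathlib

section
/- Let L = L_I ∪ L_U with L_I ∩ L_U = ∅. Let S be a deterministic IOLTS over L without τ-transitions whose state type has cardinality n, and let I be an IOLTS over L without τ-transitions whose state type has cardinality m. If I does not ioco-conform to S, then there exist σ ∈ L* and x ∈ L_U such that σ ∈ otr(S), σ·x ∈ otr(I), σ·x ∉ otr(S), and the length of σ·x is at most m·(n+1). -/
/-- Paths of a τ-free LTS: `LPath step s σ q` means there is a path from `s`
to `q` labeled by the word `σ`. -/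
inductive LPath {S L : Type*} (step : S → L → S → Prop) : S → List L → S → Prop
  | refl (s : S) : LPath step s [] s
  | cons {s r q : S} {l : L} {σ : List L} :
      step s l r → LPath step r σ q → LPath step s (l :: σ) q

/-- Trace language of a τ-free LTS with initial state `s0`. -/
def otr {S L : Type*} (step : S → L → S → Prop) (s0 : S) : Set (List L) :=
  {σ | ∃ q, LPath step s0 σ q}

/-- `s after σ`: the set of states reachable from `s` via the word `σ`. -/
def after {S L : Type*} (step : S → L → S → Prop) (s : S) (σ : List L) : Set S :=
  {q | LPath step s σ q}

/-- `out(Q')`: the set of output labels enabled in some state of `Q'`. -/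
def outOf {S L : Type*} (LU : Set L) (step : S → L → S → Prop) (Q' : Set S) :
    Set L :=
  {x | x ∈ LU ∧ ∃ q ∈ Q', ∃ q', step q x q'}

theorem lpath_append {S L : Type*} {step : S → L → S → Prop} {s q : S} {σ τ : List L} :
    LPath step s (σ ++ τ) q ↔ ∃ r, LPath step s σ r ∧ LPath step r τ q := by
  constructor
  · induction σ generalizing s with
    | nil => intro h; exact ⟨s, .refl s, h⟩
    | cons l σ ih =>
      intro h
      cases h with
      | cons hst hp =>
        obtain ⟨r, h1, h2⟩ := ih hp
        exact ⟨r, .cons hst h1, h2⟩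
  · rintro ⟨r, h1, h2⟩
    induction h1 with
    | refl => exact h2
    | cons hst _ ih => exact .cons hst (ih h2)

theorem lpath_det {S L : Type*} {step : S → L → S → Prop}
    (hdet : ∀ s l s1 s2, step s l s1 → step s l s2 → s1 = s2) :
    ∀ {σ : List L} {s q1 q2 : S}, LPath step s σ q1 → LPath step s σ q2 → q1 = q2 := by
  intro σ
  induction σ with
  | nil => intro s q1 q2 h1 h2; cases h1; cases h2; rfl
  | cons l σ ih =>
    intro s q1 q2 h1 h2
    cases h1 with
    | cons hs1 hp1 =>
      cases h2 with
      | cons hs2 hp2 =>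
        obtain rfl := hdet _ _ _ _ hs1 hs2
        exact ih hp1 hp2

theorem lpath_shrink {T L : Type*} [Fintype T] {step : T → L → T → Prop}
    {a b : T} :
    ∀ (k : ℕ) (σ : List L), σ.length ≤ k → LPath step a σ b →
      ∃ τ : List L, τ.length < Fintype.card T ∧ LPath step a τ b := by
  intro k
  induction k with
  | zero =>
    intro σ hlen hp
    have hσ : σ = [] := List.length_eq_zero_iff.mp (Nat.le_zero.mp hlen)
    subst hσ
    have : 0 < Fintype.card T := Fintype.card_pos_iff.mpr ⟨a⟩
    exact ⟨[], by simpa using this, hp⟩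
  | succ k ih =>
    intro σ hlen hp
    by_cases hc : σ.length < Fintype.card T
    · exact ⟨σ, hc, hp⟩
    · push_neg at hc
      have hdecomp : ∀ i : Fin (σ.length + 1),
          ∃ r, LPath step a (σ.take i) r ∧ LPath step r (σ.drop i) b := by
        intro i
        exact lpath_append.mp (by rw [List.take_append_drop]; exact hp)
      choose f hf1 hf2 using hdecomp
      have hcard : Fintype.card T < Fintype.card (Fin (σ.length + 1)) := by
        simp only [Fintype.card_fin]
        omega
      obtain ⟨i, j, hne, heq⟩ := Fintype.exists_ne_map_eq_of_card_lt f hcard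
      -- wlog i < j
      rcases Ne.lt_or_gt hne with hij | hij
      case _ =>
        have hpath : LPath step a (σ.take i ++ σ.drop j) b :=
          lpath_append.mpr ⟨f i, hf1 i, heq ▸ hf2 j⟩
        have hlen' : (σ.take i ++ σ.drop j).length ≤ k := by
          simp only [List.length_append, List.length_take, List.length_drop]
          have h1 : (i : ℕ) < (j : ℕ) := hij
          have h2 : (j : ℕ) ≤ σ.length := Nat.lt_succ_iff.mp j.isLt
          omega
        exact ih _ hlen' hpath
      case _ =>
        have hpath : LPath step a (σ.take j ++ σ.drop i) b :=
          lpath_append.mpr ⟨f j, hf1 j, heq ▸ hf2 i⟩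
        have hlen' : (σ.take j ++ σ.drop i).length ≤ k := by
          simp only [List.length_append, List.length_take, List.length_drop]
          have h1 : (j : ℕ) < (i : ℕ) := hij
          have h2 : (i : ℕ) ≤ σ.length := Nat.lt_succ_iff.mp i.isLt
          omega
        exact ih _ hlen' hpath

theorem lpath_prod {SS Q L : Type*} {stepS : SS → L → SS → Prop} {stepI : Q → L → Q → Prop}
    {q0 q : Q} {s0 s : SS} {σ : List L} :
    LPath (fun p l p' => stepI p.1 l p'.1 ∧ stepS p.2 l p'.2) (q0, s0) σ (q, s) ↔
      LPath stepI q0 σ q ∧ LPath stepS s0 σ s := by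
  constructor
  · intro h
    generalize hA : (q0, s0) = A at h
    generalize hB : (q, s) = B at h
    induction h generalizing q0 s0 q s with
    | refl t =>
      injection hA.trans hB.symm with h1 h2
      subst h1; subst h2
      exact ⟨.refl _, .refl _⟩
    | cons hst hp ih =>
      subst hA; subst hB
      obtain ⟨h1, h2⟩ := ih rfl rfl
      exact ⟨.cons hst.1 h1, .cons hst.2 h2⟩
  · rintro ⟨h1, h2⟩
    induction h1 generalizing s0 with
    | refl => cases h2; exact .refl _
    | cons hst _ ih =>
      cases h2 with
      | cons hst2 hp2 => exact .cons ⟨hst, hst2⟩ (ih hp2)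

/-- if a τ-free IOLTS `I` with `m` states does not ioco-conform to
a deterministic τ-free IOLTS `S` with `n` states, then there is a witness
`σ ++ [x]` of length at most `m * (n + 1)`. -/
theorem short_witness_of_not_ioco {L SS Q : Type*} [Fintype SS] [Fintype Q]
    (LI LU : Set L) (h_union : LI ∪ LU = Set.univ) (h_disj : LI ∩ LU = ∅)
    (stepS : SS → L → SS → Prop) (s0 : SS)
    (hdet : ∀ s l s1 s2, stepS s l s1 → stepS s l s2 → s1 = s2)
    (stepI : Q → L → Q → Prop) (q0 : Q)
    (n m : ℕ) (hn : Fintype.card SS = n) (hm : Fintype.card Q = m)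
    (h : ¬ (∀ σ ∈ otr stepS s0,
        outOf LU stepI (after stepI q0 σ) ⊆ outOf LU stepS (after stepS s0 σ))) :
    ∃ σ : List L, ∃ x ∈ LU, σ ∈ otr stepS s0 ∧ σ ++ [x] ∈ otr stepI q0 ∧
      σ ++ [x] ∉ otr stepS s0 ∧ (σ ++ [x]).length ≤ m * (n + 1) := by
  push_neg at h
  obtain ⟨σ, hσ, hsub⟩ := h
  obtain ⟨x, hxI, hxS⟩ := Set.not_subset.mp hsub
  obtain ⟨hxLU, q, hq, q', hstep⟩ := hxI
  obtain ⟨s, hs⟩ := hσ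
  -- shrink the combined path
  have hprod : LPath (fun p l p' => stepI p.1 l p'.1 ∧ stepS p.2 l p'.2)
      ((q0, s0) : Q × SS) σ (q, s) := lpath_prod.mpr ⟨hq, hs⟩
  obtain ⟨τ, hτlen, hτpath⟩ := lpath_shrink σ.length σ le_rfl hprod
  obtain ⟨hτI, hτS⟩ := lpath_prod.mp hτpath
  have hcard : Fintype.card (Q × SS) = m * n := by
    rw [Fintype.card_prod, hn, hm]
  refine ⟨τ, x, hxLU, ⟨s, hτS⟩, ?_, ?_, ?_⟩
  · exact ⟨q', lpath_append.mpr ⟨q, hτI, .cons hstep (.refl _)⟩⟩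
  · rintro ⟨t, ht⟩
    obtain ⟨u, hu1, hu2⟩ := lpath_append.mp ht
    have he : u = s := lpath_det hdet hu1 hτS
    cases hu2 with
    | cons hstep' hrest =>
      exact hxS ⟨hxLU, s, hs, _, he ▸ hstep'⟩
  · simp only [List.length_append, List.length_cons, List.length_nil]
    rw [hcard] at hτlen
    nlinarith [hτlen]
end

section
/- Let L = L_I ∪ L_U be a finite alphabet with L_I ∩ L_U = ∅. Let S be a deterministic IOLTS over L without τ-transitions whose state type has cardinality n, and let m ≥ 1. Then there exists a finite set of words T ⊆ L* (a finite complete test suite) such that for every IOLTS I over L without τ-transitions whose state type has cardinality at most m: I ioco S if and only if otr(I) ∩ T = ∅. -/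
namespace TestSuiteAux

variable {S L : Type*}

theorem lpath_append {step : S → L → S → Prop} {s r q : S} {σ1 σ2 : List L}
    (h1 : LPath step s σ1 r) (h2 : LPath step r σ2 q) :
    LPath step s (σ1 ++ σ2) q := by
  induction h1 with
  | refl => simpa
  | cons hstep _ ih => exact LPath.cons hstep (ih h2)

theorem lpath_concat_inv {step : S → L → S → Prop} {s q : S} {σ : List L} {x : L}
    (h : LPath step s (σ ++ [x]) q) : ∃ r, LPath step s σ r ∧ step r x q := by
  induction σ generalizing s with
  | nil =>
    cases h with
    | cons hs ht => cases ht; exact ⟨s, LPath.refl s, hs⟩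
  | cons l σ ih =>
    cases h with
    | cons hs ht =>
      obtain ⟨r, hr, hx⟩ := ih ht
      exact ⟨r, LPath.cons hs hr, hx⟩

theorem lpath_det {step : S → L → S → Prop}
    (hdet : ∀ s l s1 s2, step s l s1 → step s l s2 → s1 = s2) :
    ∀ (σ : List L) (s q1 q2 : S), LPath step s σ q1 → LPath step s σ q2 → q1 = q2 := by
  intro σ
  induction σ with
  | nil => intro s q1 q2 h1 h2; cases h1; cases h2; rfl
  | cons l σ ih =>
    intro s q1 q2 h1 h2
    cases h1 with
    | cons hs1 ht1 =>
      cases h2 with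
      | cons hs2 ht2 =>
        obtain rfl := hdet _ _ _ _ hs1 hs2
        exact ih _ _ _ ht1 ht2

/-- Paths with an explicit list of intermediate states. -/
inductive LPathW (step : S → L → S → Prop) : S → List L → List S → S → Prop
  | refl (s : S) : LPathW step s [] [] s
  | cons {s r q : S} {l : L} {σ : List L} {ts : List S} :
      step s l r → LPathW step r σ ts q → LPathW step s (l :: σ) (r :: ts) q

theorem lpath_to_w {step : S → L → S → Prop} {s q : S} {σ : List L}
    (h : LPath step s σ q) : ∃ ts, LPathW step s σ ts q := by
  induction h with
  | refl s => exact ⟨[], LPathW.refl s⟩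
  | cons hstep _ ih =>
    obtain ⟨ts, hts⟩ := ih
    exact ⟨_ :: ts, LPathW.cons hstep hts⟩

theorem w_to_lpath {step : S → L → S → Prop} {s q : S} {σ : List L} {ts : List S}
    (h : LPathW step s σ ts q) : LPath step s σ q := by
  induction h with
  | refl s => exact LPath.refl s
  | cons hstep _ ih => exact LPath.cons hstep ih

theorem w_length {step : S → L → S → Prop} {s q : S} {σ : List L} {ts : List S}
    (h : LPathW step s σ ts q) : ts.length = σ.length := by
  induction h with
  | refl s => rfl
  | cons _ _ ih => simpa using ih

theorem w_split {step : S → L → S → Prop} :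
    ∀ {s : S} {σ : List L} {ts : List S} {q : S}, LPathW step s σ ts q →
    ∀ (ts1 : List S) (r : S) (ts2 : List S), ts = ts1 ++ r :: ts2 →
      ∃ σ1 σ2, σ = σ1 ++ σ2 ∧ σ1 ≠ [] ∧ LPath step s σ1 r ∧ LPathW step r σ2 ts2 q := by
  intro s σ ts q h
  induction h with
  | refl s => intro ts1 r ts2 heq; simp at heq
  | @cons s r0 q l σ ts hstep htail ih =>
    intro ts1 r ts2 heq
    cases ts1 with
    | nil =>
      simp only [List.nil_append, List.cons.injEq] at heq
      obtain ⟨rfl, rfl⟩ := heq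
      exact ⟨[l], σ, rfl, by simp, LPath.cons hstep (LPath.refl _), htail⟩
    | cons a ts1' =>
      simp only [List.cons_append, List.cons.injEq] at heq
      obtain ⟨rfl, heq2⟩ := heq
      obtain ⟨σ1, σ2, rfl, hne, hp, hw⟩ := ih ts1' r ts2 heq2
      exact ⟨l :: σ1, σ2, rfl, by simp, LPath.cons hstep hp, hw⟩

theorem dup_decomp {α : Type*} {l : List α} (h : ¬ l.Nodup) :
    ∃ x u v w, l = u ++ x :: v ++ x :: w := by
  induction l with
  | nil => simp at h
  | cons a l ih =>
    by_cases ha : a ∈ l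
    · obtain ⟨v, w, rfl⟩ := List.append_of_mem ha
      exact ⟨a, [], v, w, by simp⟩
    · have hl : ¬ l.Nodup := by
        intro hn
        exact h (List.nodup_cons.mpr ⟨ha, hn⟩)
      obtain ⟨x, u, v, w, rfl⟩ := ih hl
      exact ⟨x, a :: u, v, w, by simp⟩

theorem shorten_once [Fintype S] {step : S → L → S → Prop} {s : S} {σ : List L}
    {ts : List S} {q : S} (hw : LPathW step s σ ts q)
    (hlen : Fintype.card S < (s :: ts).length) :
    ∃ σ', σ'.length < σ.length ∧ LPath step s σ' q := by
  have hnd : ¬ (s :: ts).Nodup := by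
    intro hn
    exact absurd (List.Nodup.length_le_card hn) (by omega)
  obtain ⟨x, u, v, w, heq⟩ := dup_decomp hnd
  rw [List.append_assoc, List.cons_append] at heq
  cases u with
  | nil =>
    simp only [List.nil_append, List.cons.injEq] at heq
    obtain ⟨rfl, hts⟩ := heq
    obtain ⟨σ1, σ2, rfl, hne, _, hw2⟩ := w_split hw v s w hts
    refine ⟨σ2, ?_, w_to_lpath hw2⟩
    have : 0 < σ1.length := List.length_pos_iff.mpr hne
    simp only [List.length_append]; omega
  | cons a u' =>
    simp only [List.cons_append, List.cons.injEq] at heq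
    obtain ⟨rfl, hts⟩ := heq
    obtain ⟨σ1, σ2, rfl, hne1, hp1, hw2⟩ := w_split hw u' x (v ++ x :: w) hts
    obtain ⟨σ2a, σ2b, rfl, hne2, _, hw3⟩ := w_split hw2 v x w rfl
    refine ⟨σ1 ++ σ2b, ?_, lpath_append hp1 (w_to_lpath hw3)⟩
    have : 0 < σ2a.length := List.length_pos_iff.mpr hne2
    simp only [List.length_append]; omega

theorem exists_short [Fintype S] {step : S → L → S → Prop} :
    ∀ (k : ℕ) (σ : List L), σ.length ≤ k → ∀ {s q : S}, LPath step s σ q →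
      ∃ σ', σ'.length < Fintype.card S ∧ LPath step s σ' q := by
  intro k
  induction k with
  | zero =>
    intro σ hlen s q h
    have hσ : σ.length = 0 := Nat.le_zero.mp hlen
    have : 0 < Fintype.card S := Fintype.card_pos_iff.mpr ⟨s⟩
    exact ⟨σ, by omega, h⟩
  | succ k ih =>
    intro σ hlen s q h
    by_cases hc : σ.length < Fintype.card S
    · exact ⟨σ, hc, h⟩
    · obtain ⟨ts, hw⟩ := lpath_to_w h
      have hlen2 : Fintype.card S < (s :: ts).length := by
        simp [w_length hw]; omega
      obtain ⟨σ', hlt, h'⟩ := shorten_once hw hlen2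
      exact ih σ' (by omega) h'

theorem lpath_prod {Q : Type*} {stepS : S → L → S → Prop} {stepI : Q → L → Q → Prop} :
    ∀ (σ : List L) (s t : S) (qi qf : Q),
      LPath (fun p l p' => stepS p.1 l p'.1 ∧ stepI p.2 l p'.2) (s, qi) σ (t, qf) ↔
        LPath stepS s σ t ∧ LPath stepI qi σ qf := by
  intro σ
  induction σ with
  | nil =>
    intro s t qi qf
    constructor
    · intro h
      cases h
      exact ⟨LPath.refl s, LPath.refl qi⟩
    · rintro ⟨h1, h2⟩
      cases h1; cases h2
      exact LPath.refl _
  | cons l σ ih =>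
    intro s t qi qf
    constructor
    · intro h
      cases h with
      | @cons _ p _ _ _ hs ht =>
        have h2 := (ih p.1 t p.2 qf).mp (by simpa using ht)
        exact ⟨LPath.cons hs.1 h2.1, LPath.cons hs.2 h2.2⟩
    · rintro ⟨h1, h2⟩
      cases h1 with
      | @cons _ r1 _ _ _ hs1 ht1 =>
        cases h2 with
        | @cons _ r2 _ _ _ hs2 ht2 =>
          exact LPath.cons (s := (s, qi)) (r := (r1, r2)) ⟨hs1, hs2⟩
            ((ih r1 t r2 qf).mpr ⟨ht1, ht2⟩)

end TestSuiteAux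

open TestSuiteAux in
/-- for a deterministic τ-free IOLTS `S` with `n` states over a
finite alphabet `L = L_I ∪ L_U` and a bound `m ≥ 1`, there is a finite complete
test suite `T ⊆ L*` such that every τ-free IOLTS `I` with at most `m` states
satisfies: `I ioco S` iff `otr(I) ∩ T = ∅`. -/
theorem exists_finite_complete_test_suite {L SS : Type*} [Fintype L] [Fintype SS]
    (LI LU : Set L) (h_union : LI ∪ LU = Set.univ) (h_disj : LI ∩ LU = ∅)
    (stepS : SS → L → SS → Prop) (s0 : SS)
    (hdet : ∀ s l s1 s2, stepS s l s1 → stepS s l s2 → s1 = s2)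
    (n : ℕ) (hn : Fintype.card SS = n) (m : ℕ) (hm : 1 ≤ m) :
    ∃ T : Finset (List L),
      ∀ (Q : Type) [Fintype Q], Fintype.card Q ≤ m →
        ∀ (stepI : Q → L → Q → Prop) (q0 : Q),
          ((∀ σ ∈ otr stepS s0,
              outOf LU stepI (after stepI q0 σ) ⊆ outOf LU stepS (after stepS s0 σ)) ↔
            otr stepI q0 ∩ ↑T = ∅) := by
  classical
  -- all lists over L of length ≤ k
  let lists : ℕ → Finset (List L) := fun k =>
    (Finset.range (k + 1)).biUnion fun j =>
      (Finset.univ : Finset (List.Vector L j)).image Subtype.val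
  have hlists : ∀ k (σ : List L), σ.length ≤ k → σ ∈ lists k := by
    intro k σ hσ
    refine Finset.mem_biUnion.mpr ⟨σ.length, Finset.mem_range.mpr (by omega), ?_⟩
    exact Finset.mem_image.mpr
      ⟨⟨σ, rfl⟩, @Finset.mem_univ (List.Vector L σ.length) _ ⟨σ, rfl⟩, rfl⟩
  -- the failure predicate
  let P : List L → Prop := fun ρ =>
    ∃ σ x, ρ = σ ++ [x] ∧ x ∈ LU ∧ (∃ t, LPath stepS s0 σ t) ∧
      x ∉ outOf LU stepS (after stepS s0 σ)
  refine ⟨(lists (n * m)).filter (fun ρ => P ρ), ?_⟩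
  intro Q _ hQ stepI q0
  constructor
  · -- ioco → empty intersection
    intro hioco
    rw [Set.eq_empty_iff_forall_notMem]
    rintro ρ ⟨hotr, hT⟩
    obtain ⟨σ, x, rfl, hxLU, hσS, hnot⟩ := (Finset.mem_filter.mp hT).2
    obtain ⟨q, hq⟩ := hotr
    obtain ⟨r, hr, hx⟩ := lpath_concat_inv hq
    exact hnot (hioco σ hσS ⟨hxLU, r, hr, q, hx⟩)
  · -- empty intersection → ioco
    intro hempty σ hσ x hxI
    by_contra hxS
    obtain ⟨t, ht⟩ := hσ
    obtain ⟨hxLU, r, hr, q', hq'⟩ := hxI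
    -- product path
    have hprod : LPath (fun (p : SS × Q) l p' => stepS p.1 l p'.1 ∧ stepI p.2 l p'.2)
        (s0, q0) σ (t, r) := (lpath_prod σ s0 t q0 r).mpr ⟨ht, hr⟩
    obtain ⟨σ', hlen', hprod'⟩ := exists_short σ.length σ le_rfl hprod
    obtain ⟨ht', hr'⟩ := (lpath_prod σ' s0 t q0 r).mp hprod'
    have hcard : Fintype.card (SS × Q) ≤ n * m := by
      rw [Fintype.card_prod, hn]
      exact Nat.mul_le_mul_left n hQ
    have hlen : σ'.length < n * m := lt_of_lt_of_le hlen' hcard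
    -- x is not an output of S after σ'
    have hnot' : x ∉ outOf LU stepS (after stepS s0 σ') := by
      rintro ⟨_, u, hu, u', hstep⟩
      obtain rfl := lpath_det hdet σ' s0 u t hu ht'
      exact hxS ⟨hxLU, u, ht, u', hstep⟩
    -- σ' ++ [x] is a failing test in T and a trace of I
    have hmemT : σ' ++ [x] ∈ (lists (n * m)).filter (fun ρ => P ρ) := by
      refine Finset.mem_filter.mpr ⟨hlists _ _ (by simp; omega), ?_⟩
      exact ⟨σ', x, rfl, hxLU, ⟨t, ht'⟩, hnot'⟩
    have hmemI : σ' ++ [x] ∈ otr stepI q0 :=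
      ⟨q', lpath_append hr' (LPath.cons hq' (LPath.refl _))⟩
    have : σ' ++ [x] ∈ otr stepI q0 ∩ ↑((lists (n * m)).filter (fun ρ => P ρ)) :=
      ⟨hmemI, hmemT⟩
    rw [hempty] at this
    exact this
end
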